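/- Let T>0, let k:[0,T]→ℝ be continuously differentiable and nonincreasing, let H∈C¹(ℝ) be convex, and let u:[0,T]→ℝ be continuously differentiable. Then for every t∈(0,T] one has H'(u(t))·(d/dt)(k∗u)(t) ≥ (d/dt)(k∗(H∘u))(t) + (H'(u(t))u(t) − H(u(t)))·k(t). -/

import Mathlib

open MeasureTheory intervalIntegral

open Set Filter Asymptotics Topology Metric


lemma tangent_le (H : ℝ → ℝ) (hH : Differentiable ℝ H) (hc : ConvexOn ℝ Set.univ H)
    (x y : ℝ) : H x + deriv H x * (y - x) ≤ H y := by
  rcases lt_trichotomy x y with h | h | h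
  · have h1 := hc.deriv_le_slope (mem_univ x) (mem_univ y) h (hH x)
    rw [slope_def_field] at h1
    have hxy : 0 < y - x := by linarith
    have := (le_div_iff₀ hxy).mp h1
    linarith
  · simp [h]
  · have h1 := hc.slope_le_deriv (mem_univ y) (mem_univ x) h (hH x)
    rw [slope_def_field] at h1
    have hxy : 0 < x - y := by linarith
    have := (div_le_iff₀ hxy).mp h1
    linarith

lemma deriv_nonpos_of_antitoneOn {k : ℝ → ℝ} {T : ℝ} (hT : 0 < T)
    (hk : Differentiable ℝ k) (hmono : AntitoneOn k (Set.Icc 0 T)) :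
    ∀ x ∈ Set.Icc 0 T, deriv k x ≤ 0 := by
  intro x hx
  rcases lt_or_eq_of_le hx.2 with hxT | hxT
  · have hd : HasDerivWithinAt k (deriv k x) (Ioc x T) x := (hk x).hasDerivAt.hasDerivWithinAt
    rw [hasDerivWithinAt_iff_tendsto_slope] at hd
    have hs : Ioc x T \ {x} = Ioc x T := diff_singleton_eq_self (by simp)
    rw [hs] at hd
    have hnb : (𝓝[Ioc x T] x).NeBot := by
      rw [← mem_closure_iff_nhdsWithin_neBot, closure_Ioc hxT.ne]
      exact ⟨le_rfl, hxT.le⟩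
    refine le_of_tendsto hd ?_
    filter_upwards [self_mem_nhdsWithin] with y hy
    have hy0 : y ∈ Set.Icc 0 T := ⟨le_trans hx.1 hy.1.le, hy.2⟩
    have := hmono hx hy0 hy.1.le
    rw [slope_def_field]
    exact div_nonpos_of_nonpos_of_nonneg (by linarith) (by linarith [hy.1])
  · subst hxT
    have hd : HasDerivWithinAt k (deriv k x) (Ico 0 x) x := (hk x).hasDerivAt.hasDerivWithinAt
    rw [hasDerivWithinAt_iff_tendsto_slope] at hd
    have hs : Ico 0 x \ {x} = Ico 0 x := diff_singleton_eq_self (by simp)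
    rw [hs] at hd
    have hnb : (𝓝[Ico 0 x] x).NeBot := by
      rw [← mem_closure_iff_nhdsWithin_neBot, closure_Ico hT.ne]
      exact ⟨hT.le, le_rfl⟩
    refine le_of_tendsto hd ?_
    filter_upwards [self_mem_nhdsWithin] with y hy
    have := hmono ⟨hy.1, hy.2.le⟩ hx hy.2.le
    rw [slope_def_field]
    exact div_nonpos_of_nonneg_of_nonpos (by linarith) (by linarith [hy.2])

lemma conv_hasDerivAt (k v : ℝ → ℝ) (hk : ContDiff ℝ 1 k) (hv : Continuous v) (t : ℝ) :
    HasDerivAt (fun r => ∫ τ in (0:ℝ)..r, k (r - τ) * v τ)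
      (k 0 * v t + ∫ τ in (0:ℝ)..t, deriv k (t - τ) * v τ) t := by
  have hkc : Continuous k := hk.continuous
  have hkd : Continuous (deriv k) := hk.continuous_deriv le_rfl
  have hkdiff : Differentiable ℝ k := hk.differentiable one_ne_zero
  -- continuity of integrands
  have hcont : ∀ r : ℝ, Continuous (fun τ => k (r - τ) * v τ) := fun r =>
    (hkc.comp (continuous_const.sub continuous_id)).mul hv
  have hcont' : ∀ r : ℝ, Continuous (fun τ => deriv k (r - τ) * v τ) := fun r =>
    (hkd.comp (continuous_const.sub continuous_id)).mul hv
  set c : ℝ := k 0 * v t with hc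
  set A : ℝ := ∫ τ in (0:ℝ)..t, deriv k (t - τ) * v τ with hA
  set G : ℝ → ℝ := fun x => ∫ τ in (0:ℝ)..t, k (x - τ) * v τ with hG
  -- Step A: parametric derivative with fixed bounds
  have stepA : HasDerivAt G A t := by
    -- bound for deriv k on a compact set
    obtain ⟨M, hM⟩ : ∃ M, ∀ y ∈ Icc (t - 1 - |t|) (t + 1 + |t|), ‖deriv k y‖ ≤ M :=
      isCompact_Icc.exists_bound_of_continuousOn hkd.continuousOn
    have h := intervalIntegral.hasDerivAt_integral_of_dominated_loc_of_deriv_le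
      (F := fun x τ => k (x - τ) * v τ) (F' := fun x τ => deriv k (x - τ) * v τ)
      (x₀ := t) (a := (0:ℝ)) (b := t) (bound := fun τ => M * |v τ|) (μ := volume)
      (s := ball t 1) (ball_mem_nhds t one_pos)
      (Eventually.of_forall fun x => ((hcont x).aestronglyMeasurable))
      ((hcont t).intervalIntegrable _ _)
      ((hcont' t).aestronglyMeasurable)
      ?_ ?_ ?_
    · exact h.2
    · refine Eventually.of_forall fun τ hτ x hx => ?_
      have hτ' : |τ| ≤ |t| := by
        rw [abs_le]
        refine ⟨le_trans (le_min (neg_nonpos.mpr (abs_nonneg t)) (neg_abs_le t)) hτ.1.le,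
          hτ.2.trans (max_le (abs_nonneg t) (le_abs_self t))⟩
      have hx' : |x - t| < 1 := by rw [mem_ball, Real.dist_eq] at hx; exact hx
      have hmem : x - τ ∈ Icc (t - 1 - |t|) (t + 1 + |t|) := by
        constructor <;> [nlinarith [abs_le.mp hτ', abs_lt.mp hx'];
          nlinarith [abs_le.mp hτ', abs_lt.mp hx']]
      calc ‖deriv k (x - τ) * v τ‖ = ‖deriv k (x - τ)‖ * |v τ| := by
            rw [norm_mul]; rfl
        _ ≤ M * |v τ| := by
            apply mul_le_mul_of_nonneg_right (hM _ hmem) (abs_nonneg _)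
    · exact ((continuous_const.mul hv.abs).intervalIntegrable _ _)
    · refine Eventually.of_forall fun τ hτ x hx => ?_
      have h1 : HasDerivAt (fun x => k (x - τ)) (deriv k (x - τ)) x := by
        simpa [Function.comp_def] using (hkdiff (x - τ)).hasDerivAt.comp x ((hasDerivAt_id x).sub_const τ)
      exact h1.mul_const (v τ)
  -- Step B: boundary term is c·(r-t) + o(r-t)
  have stepB : (fun r => (∫ τ in t..r, k (r - τ) * v τ) - (r - t) * c) =o[𝓝 t]
      (fun r => r - t) := by
    rw [isLittleO_iff]
    intro ε hε
    have hφ : ContinuousAt (fun p : ℝ × ℝ => k (p.1 - p.2) * v p.2) (t, t) :=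
      ((hkc.comp (continuous_fst.sub continuous_snd)).mul (hv.comp continuous_snd)).continuousAt
    have hc' : k (t - t) * v t = c := by rw [sub_self]
    have h2 : ∀ᶠ y in 𝓝 (k (t - t) * v t), ‖y - c‖ ≤ ε := by
      rw [hc']
      filter_upwards [Metric.closedBall_mem_nhds c hε] with y hy
      rwa [mem_closedBall, Real.dist_eq] at hy
    have hset : ∀ᶠ p : ℝ × ℝ in 𝓝 (t, t), ‖k (p.1 - p.2) * v p.2 - c‖ ≤ ε := hφ.eventually h2
    obtain ⟨s1, hs1, s2, hs2, hsub⟩ := mem_nhds_prod_iff.mp hset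
    obtain ⟨δ1, hδ1, hb1⟩ := Metric.mem_nhds_iff.mp hs1
    obtain ⟨δ2, hδ2, hb2⟩ := Metric.mem_nhds_iff.mp hs2
    filter_upwards [Metric.ball_mem_nhds t (lt_min hδ1 hδ2)] with r hr
    rw [mem_ball, Real.dist_eq] at hr
    have hbound : ∀ τ ∈ Set.uIoc t r, ‖k (r - τ) * v τ - c‖ ≤ ε := by
      intro τ hτ
      have h1 : |τ - t| ≤ |r - t| := by
        rcases le_total t r with h | h
        · rw [uIoc_of_le h] at hτ
          rw [abs_of_nonneg (sub_nonneg.mpr h), abs_le]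
          exact ⟨by linarith [hτ.1], by linarith [hτ.2]⟩
        · rw [uIoc_of_ge h] at hτ
          rw [abs_of_nonpos (sub_nonpos.mpr h), abs_le]
          exact ⟨by linarith [hτ.1], by linarith [hτ.2]⟩
      refine hsub (Set.mk_mem_prod (hb1 ?_) (hb2 ?_))
      · rw [mem_ball, Real.dist_eq]
        exact lt_of_lt_of_le hr (min_le_left _ _)
      · rw [mem_ball, Real.dist_eq]
        exact lt_of_le_of_lt h1 (lt_of_lt_of_le hr (min_le_right _ _))
    have hint : (∫ τ in t..r, k (r - τ) * v τ) - (r - t) * c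
        = ∫ τ in t..r, (k (r - τ) * v τ - c) := by
      rw [intervalIntegral.integral_sub ((hcont r).intervalIntegrable _ _)
        intervalIntegrable_const, intervalIntegral.integral_const, smul_eq_mul]
    rw [hint]
    calc ‖∫ τ in t..r, (k (r - τ) * v τ - c)‖ ≤ ε * |r - t| :=
          intervalIntegral.norm_integral_le_of_norm_le_const hbound
      _ = ε * ‖r - t‖ := by rw [Real.norm_eq_abs]
  -- assemble
  rw [hasDerivAt_iff_isLittleO]
  have key : ∀ r : ℝ,
      (∫ τ in (0:ℝ)..r, k (r - τ) * v τ) - (∫ τ in (0:ℝ)..t, k (t - τ) * v τ)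
        - (r - t) • (c + A)
      = ((∫ τ in t..r, k (r - τ) * v τ) - (r - t) * c) + (G r - G t - (r - t) • A) := by
    intro r
    have hsplit : (∫ τ in (0:ℝ)..r, k (r - τ) * v τ) - (∫ τ in (0:ℝ)..t, k (r - τ) * v τ)
        = ∫ τ in t..r, k (r - τ) * v τ :=
      intervalIntegral.integral_interval_sub_left ((hcont r).intervalIntegrable _ _)
        ((hcont r).intervalIntegrable _ _)
    simp only [smul_eq_mul, hG]
    have hGt : G t = ∫ τ in (0:ℝ)..t, k (t - τ) * v τ := rfl
    simp only [hG] at hGt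
    nlinarith [hsplit]
  exact ((stepB.add (hasDerivAt_iff_isLittleO.mp stepA)).congr
    (fun r => (key r).symm) (fun _ => rfl))

/-- Fundamental inequality for integro-differential operators of the form
`d/dt (k ∗ u)`: if `k` is continuously differentiable and nonincreasing on
`[0,T]` and `H` is a convex `C¹` function, then for every `t ∈ (0,T]`,
`H'(u(t)) d/dt(k∗u)(t) ≥ d/dt(k∗(H∘u))(t) + (H'(u(t))u(t) − H(u(t))) k(t)`. -/
theorem fundamental_inequality (T : ℝ) (hT : 0 < T) (k u H : ℝ → ℝ)
    (hk : ContDiff ℝ 1 k) (hkmono : AntitoneOn k (Set.Icc 0 T))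
    (hu : ContDiff ℝ 1 u) (hH : ContDiff ℝ 1 H)
    (hHconv : ConvexOn ℝ Set.univ H) :
    ∀ t ∈ Set.Ioc (0:ℝ) T,
      deriv H (u t) * deriv (fun r => ∫ τ in (0:ℝ)..r, k (r - τ) * u τ) t ≥
        deriv (fun r => ∫ τ in (0:ℝ)..r, k (r - τ) * H (u τ)) t +
          (deriv H (u t) * u t - H (u t)) * k t := by
  intro t ht
  have hucont := hu.continuous
  have hHu : Continuous (fun τ => H (u τ)) := hH.continuous.comp hucont
  have e1 : deriv (fun r => ∫ τ in (0:ℝ)..r, k (r - τ) * u τ) t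
      = k 0 * u t + ∫ τ in (0:ℝ)..t, deriv k (t - τ) * u τ :=
    (conv_hasDerivAt k u hk hucont t).deriv
  have e2 : deriv (fun r => ∫ τ in (0:ℝ)..r, k (r - τ) * H (u τ)) t
      = k 0 * H (u t) + ∫ τ in (0:ℝ)..t, deriv k (t - τ) * H (u τ) :=
    (conv_hasDerivAt k (fun τ => H (u τ)) hk hHu t).deriv
  rw [e1, e2]
  set A := deriv H (u t) with hA
  have hkd : Continuous (deriv k) := hk.continuous_deriv le_rfl
  have c1 : Continuous (fun τ => deriv k (t - τ)) :=
    hkd.comp (continuous_const.sub continuous_id)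
  have hks : (∫ τ in (0:ℝ)..t, deriv k (t - τ)) = k t - k 0 := by
    rw [intervalIntegral.integral_comp_sub_left (fun s => deriv k s) t]
    simp only [sub_zero, sub_self]
    exact intervalIntegral.integral_deriv_eq_sub
      (fun x _ => (hk.differentiable one_ne_zero x)) (hkd.intervalIntegrable _ _)
  have hw : ∀ τ : ℝ, A * u τ - H (u τ) ≤ A * u t - H (u t) := by
    intro τ
    have := tangent_le H (hH.differentiable one_ne_zero) hHconv (u t) (u τ)
    nlinarith [this]
  have hkneg : ∀ τ ∈ Icc (0:ℝ) t, deriv k (t - τ) ≤ 0 := by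
    intro τ hτ
    exact deriv_nonpos_of_antitoneOn hT (hk.differentiable one_ne_zero) hkmono (t - τ)
      ⟨by linarith [hτ.2], by linarith [hτ.1, ht.2]⟩
  have hnn : 0 ≤ ∫ τ in (0:ℝ)..t,
      deriv k (t - τ) * ((A * u τ - H (u τ)) - (A * u t - H (u t))) := by
    apply intervalIntegral.integral_nonneg ht.1.le
    intro τ hτ
    have h1 := hkneg τ hτ
    have h2 : (A * u τ - H (u τ)) - (A * u t - H (u t)) ≤ 0 := by linarith [hw τ]
    nlinarith [mul_nonneg (neg_nonneg.mpr h1) (neg_nonneg.mpr h2)]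
  have i1 : IntervalIntegrable (fun τ => deriv k (t - τ) * u τ) volume 0 t :=
    (c1.mul hucont).intervalIntegrable _ _
  have i2 : IntervalIntegrable (fun τ => deriv k (t - τ) * H (u τ)) volume 0 t :=
    (c1.mul hHu).intervalIntegrable _ _
  have i3 : IntervalIntegrable (fun τ => deriv k (t - τ)) volume 0 t :=
    c1.intervalIntegrable _ _
  have expand : (∫ τ in (0:ℝ)..t,
        deriv k (t - τ) * ((A * u τ - H (u τ)) - (A * u t - H (u t))))
      = A * (∫ τ in (0:ℝ)..t, deriv k (t - τ) * u τ)
        - (∫ τ in (0:ℝ)..t, deriv k (t - τ) * H (u τ))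
        - (k t - k 0) * (A * u t - H (u t)) := by
    have hfe : (fun τ => deriv k (t - τ) * ((A * u τ - H (u τ)) - (A * u t - H (u t))))
        = fun τ => (A * (deriv k (t - τ) * u τ) - deriv k (t - τ) * H (u τ))
            - (A * u t - H (u t)) * deriv k (t - τ) := funext fun τ => by ring
    rw [hfe, intervalIntegral.integral_sub (((i1.const_mul A).sub i2))
        (i3.const_mul _),
      intervalIntegral.integral_sub (i1.const_mul A) i2,
      intervalIntegral.integral_const_mul, intervalIntegral.integral_const_mul, hks]
    ring
  rw [expand] at hnn
  nlinarith [hnn]
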